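/- Let b > 0 (the stereo baseline) and let P = (X₁, Y, Z) ∈ ℝ³ with Z > 0 be a 3D point in the left rectified camera coordinates, so its coordinates in the right rectified camera are (X₂, Y, Z) with X₂ = X₁ − b. Define r = √(Y² + Z²), β = arctan(Y/Z), γ₁ = arctan(X₁/r), γ₂ = arctan(X₂/r). Then tan γ₁ − tan γ₂ = b/r ≠ 0, and the point is recovered by the formulas X₁ = b·tan γ₁/(tan γ₁ − tan γ₂), X₂ = b·tan γ₂/(tan γ₁ − tan γ₂), Y = b·tan β/((tan γ₁ − tan γ₂)·√(1 + tan²β)), and Z = b/((tan γ₁ − tan γ₂)·√(1 + tan²β)). -/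

import Mathlib

/-- The 3D reconstruction formula (Equation (23)) of the paper: in the
canonical rectified stereo configuration with baseline `b > 0`, a point
`(X₁, Y, Z)` with `Z > 0` (and `X₂ = X₁ - b` in the right camera) is
recovered from the angles `β = arctan(Y/Z)`, `γᵢ = arctan(Xᵢ/r)`,
`r = √(Y² + Z²)`. -/
theorem reconstruction_formula (b X₁ X₂ Y Z r β γ₁ γ₂ : ℝ)
    (hb : b > 0) (hZ : Z > 0) (hX₂ : X₂ = X₁ - b)
    (hr : r = Real.sqrt (Y ^ 2 + Z ^ 2))
    (hβ : β = Real.arctan (Y / Z))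
    (hγ₁ : γ₁ = Real.arctan (X₁ / r))
    (hγ₂ : γ₂ = Real.arctan (X₂ / r)) :
    Real.tan γ₁ - Real.tan γ₂ = b / r ∧ b / r ≠ 0 ∧
    X₁ = b * Real.tan γ₁ / (Real.tan γ₁ - Real.tan γ₂) ∧
    X₂ = b * Real.tan γ₂ / (Real.tan γ₁ - Real.tan γ₂) ∧
    Y = b * Real.tan β /
      ((Real.tan γ₁ - Real.tan γ₂) * Real.sqrt (1 + Real.tan β ^ 2)) ∧
    Z = b /
      ((Real.tan γ₁ - Real.tan γ₂) * Real.sqrt (1 + Real.tan β ^ 2)) := by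

  have hrpos : 0 < r := by
    rw [hr]
    apply Real.sqrt_pos.2
    positivity
  have hr2 : r ^ 2 = Y ^ 2 + Z ^ 2 := by
    rw [hr, Real.sq_sqrt (by positivity)]
  have ht1 : Real.tan γ₁ = X₁ / r := by rw [hγ₁, Real.tan_arctan]
  have ht2 : Real.tan γ₂ = (X₁ - b) / r := by rw [hγ₂, hX₂, Real.tan_arctan]
  have htβ : Real.tan β = Y / Z := by rw [hβ, Real.tan_arctan]
  have hdiff : Real.tan γ₁ - Real.tan γ₂ = b / r := by
    rw [ht1, ht2]; field_simp; ring
  have hsq : Real.sqrt (1 + Real.tan β ^ 2) = r / Z := by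
    rw [htβ]
    have : 1 + (Y / Z) ^ 2 = (r / Z) ^ 2 := by
      field_simp; linarith [hr2]
    rw [this, Real.sqrt_sq (by positivity)]
  refine ⟨hdiff, by positivity, ?_, ?_, ?_, ?_⟩
  · rw [hdiff, ht1]; field_simp
  · rw [hdiff, ht2, hX₂]; field_simp
  · rw [hdiff, hsq, htβ]; field_simp
  · rw [hdiff, hsq]; field_simp
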